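/- For every k ≥ 1, the diameters of the Apollonian networks satisfy diam(G_{k+3}) = diam(G_k) + 2. -/

import Mathlib

/-- A family of Apollonian networks, given by a vertex set `Vert` together with a
generation labeling `gen` and an adjacency relation `adj`, satisfying the recursive
construction: the first generation `U₁` consists of three pairwise adjacent vertices
(forming `G₁`); and for each `k ≥ 1`, for each vertex `u` of generation `k` and each
adjacent pair `{x, y}` of neighbors of `u` in `G_k`, exactly one new vertex of
generation `k + 1` is created, adjacent to exactly `u`, `x`, and `y`.
The `k`-th Apollonian network `G_k` is the induced subgraph on the vertices of
generation at most `k`. -/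
structure ApollonianNetwork where
  Vert : Type
  adj : Vert → Vert → Prop
  adj_symm : ∀ a b, adj a b → adj b a
  adj_irrefl : ∀ a, ¬ adj a a
  gen : Vert → ℕ
  gen_pos : ∀ v, 1 ≤ gen v
  /-- The first generation consists of exactly three vertices. -/
  U1_card : ∃ a b c : Vert, a ≠ b ∧ a ≠ c ∧ b ≠ c ∧ {v | gen v = 1} = {a, b, c}
  /-- `G₁` is a complete graph on the first generation. -/
  U1_complete : ∀ a b, gen a = 1 → gen b = 1 → a ≠ b → adj a b
  /-- All edges join vertices of distinct generations, except within generation 1. -/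
  adj_gen : ∀ a b, adj a b → gen a = gen b → gen a = 1
  /-- Every vertex `v` of generation `k ≥ 2` is adjacent, among the vertices of earlier
  generations, to exactly three vertices `u`, `x`, `y`, where `u` has generation `k - 1`
  and `x`, `y` are neighbors of `u` in `G_{k-1}` that are adjacent to each other. -/
  created : ∀ v, 2 ≤ gen v → ∃ u x y,
    gen u = gen v - 1 ∧ gen x ≤ gen v - 1 ∧ gen y ≤ gen v - 1 ∧
    adj u x ∧ adj u y ∧ adj x y ∧
    {w | adj v w ∧ gen w < gen v} = {u, x, y}
  /-- For each `k ≥ 1`, each vertex `u` of generation `k`, and each adjacent pair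
  `{x, y}` of neighbors of `u` in `G_k`, there is exactly one vertex of generation
  `k + 1` whose neighbors in `G_{k+1}` are exactly `u`, `x`, and `y`. -/
  attach : ∀ k, 1 ≤ k → ∀ u x y,
    gen u = k → gen x ≤ k → gen y ≤ k → x ≠ y →
    adj u x → adj u y → adj x y →
    ∃! v, gen v = k + 1 ∧ {w | adj v w ∧ gen w ≤ k} = ({u, x, y} : Set Vert)

/-- The `k`-th Apollonian network `G_k`: the induced subgraph on the vertices of
generation at most `k`. -/
def ApollonianNetwork.G (A : ApollonianNetwork) (k : ℕ) :
    SimpleGraph {v : A.Vert // A.gen v ≤ k} where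
  Adj a b := A.adj a b
  symm := ⟨fun a b h => A.adj_symm a b h⟩
  loopless := ⟨fun a h => A.adj_irrefl a h⟩

namespace ApollonianNetwork

variable {A : ApollonianNetwork}

/-- The full graph on all vertices of the network. -/
def full (A : ApollonianNetwork) : SimpleGraph A.Vert where
  Adj a b := A.adj a b
  symm := ⟨fun a b h => A.adj_symm a b h⟩
  loopless := ⟨fun a h => A.adj_irrefl a h⟩

/-- Distance in the full network. -/
noncomputable def fd (A : ApollonianNetwork) (u v : A.Vert) : ℕ := (full A).dist u v

lemma adj_ne {u v : A.Vert} (h : A.adj u v) : u ≠ v := by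
  rintro rfl; exact A.adj_irrefl u h

lemma adj_comm' {u v : A.Vert} (h : A.adj u v) : A.adj v u := A.adj_symm u v h

/-- The triple of lower neighbours of a vertex of generation `≥ 2`. -/
lemma created' (v : A.Vert) (hv : 2 ≤ A.gen v) :
    ∃ u x y : A.Vert,
      A.adj v u ∧ A.adj v x ∧ A.adj v y ∧
      A.gen u = A.gen v - 1 ∧ A.gen x ≤ A.gen v - 1 ∧ A.gen y ≤ A.gen v - 1 ∧
      A.adj u x ∧ A.adj u y ∧ A.adj x y ∧
      (∀ t, A.adj v t → A.gen t < A.gen v → (t = u ∨ t = x ∨ t = y)) := by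
  obtain ⟨u, x, y, hgu, hgx, hgy, hux, huy, hxy, hset⟩ := A.created v hv
  rw [Set.ext_iff] at hset
  have hu := (hset u).2 (by simp)
  have hx := (hset x).2 (by simp)
  have hy := (hset y).2 (by simp)
  exact ⟨u, x, y, hu.1, hx.1, hy.1, hgu, hgx, hgy, hux, huy, hxy,
    fun t ht hlt => by simpa using (hset t).1 ⟨ht, hlt⟩⟩

/-- Any two distinct lower neighbours of a vertex are adjacent. -/
lemma low_pairwise (v : A.Vert) (hv : 2 ≤ A.gen v) {p q : A.Vert}
    (hp : A.adj v p) (hpl : A.gen p < A.gen v) (hq : A.adj v q) (hql : A.gen q < A.gen v)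
    (hne : p ≠ q) : A.adj p q := by
  obtain ⟨u, x, y, _, _, _, _, _, _, hux, huy, hxy, hmem⟩ := created' v hv
  rcases hmem p hp hpl with rfl | rfl | rfl <;> rcases hmem q hq hql with rfl | rfl | rfl <;>
    first
      | exact absurd rfl hne
      | assumption
      | exact A.adj_symm _ _ (by assumption)

/-- Every vertex of generation `≥ 2` has a neighbour of much smaller generation. -/
lemma low_min (v : A.Vert) (hv : 2 ≤ A.gen v) :
    ∃ z, A.adj v z ∧ A.gen z ≤ max 1 (A.gen v - 3) := by
  obtain ⟨u, x, y, hvu, hvx, hvy, hgu, hgx, hgy, hux, huy, hxy, _⟩ := created' v hv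
  have hx2 : A.gen x = 1 ∨ A.gen x ≤ A.gen v - 2 := by
    by_cases h : A.gen x = A.gen u
    · exact Or.inl (h.trans (A.adj_gen u x hux h.symm))
    · right; omega
  have hy2 : A.gen y = 1 ∨ A.gen y ≤ A.gen v - 2 := by
    by_cases h : A.gen y = A.gen u
    · exact Or.inl (h.trans (A.adj_gen u y huy h.symm))
    · right; omega
  by_cases hx1 : A.gen x = 1
  · exact ⟨x, hvx, by omega⟩
  by_cases hy1 : A.gen y = 1
  · exact ⟨y, hvy, by omega⟩
  have hxy' : A.gen x ≠ A.gen y := fun h => hx1 (A.adj_gen x y hxy h)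
  rcases hx2 with h | h
  · exact absurd h hx1
  rcases hy2 with h' | h'
  · exact absurd h' hy1
  by_cases hc : A.gen x < A.gen y
  · exact ⟨x, hvx, by omega⟩
  · exact ⟨y, hvy, by omega⟩

/-- Every vertex of generation `≥ 2` has a neighbour of the previous generation. -/
lemma parent (v : A.Vert) (hv : 2 ≤ A.gen v) :
    ∃ u, A.adj v u ∧ A.gen u = A.gen v - 1 := by
  obtain ⟨u, x, y, hvu, _, _, hgu, _⟩ := created' v hv
  exact ⟨u, hvu, hgu⟩



/-- Walk down to generation 1. -/
lemma descend : ∀ (m : ℕ) (v : A.Vert), A.gen v ≤ m →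
    ∃ (r : A.Vert) (p : (full A).Walk v r), A.gen r = 1 ∧ p.length ≤ m - 1 := by
  intro m
  induction m with
  | zero => intro v hv; have := A.gen_pos v; omega
  | succ m ih =>
    intro v hv
    by_cases hm : A.gen v ≤ m
    · obtain ⟨r, p, hr, hp⟩ := ih v hm
      exact ⟨r, p, hr, by omega⟩
    · have hg : A.gen v = m + 1 := by omega
      by_cases h1 : A.gen v = 1
      · exact ⟨v, SimpleGraph.Walk.nil, h1, by simp⟩
      · have h2 : 2 ≤ A.gen v := by have := A.gen_pos v; omega
        obtain ⟨u, hvu, hgu⟩ := parent v h2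
        obtain ⟨r, p, hr, hp⟩ := ih u (by omega)
        refine ⟨r, SimpleGraph.Walk.cons (hvu : (full A).Adj v u) p, hr, ?_⟩
        show p.length + 1 ≤ _
        omega

/-- A walk between any two vertices, of length at most `gen u + gen v - 1`. -/
lemma walk_bound (u v : A.Vert) :
    ∃ p : (full A).Walk u v, p.length ≤ A.gen u + A.gen v - 1 := by
  obtain ⟨r, p, hr, hp⟩ := descend (A.gen u) u le_rfl
  obtain ⟨r', q, hr', hq⟩ := descend (A.gen v) v le_rfl
  by_cases hrr : r = r'
  · subst hrr
    refine ⟨p.append q.reverse, ?_⟩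
    rw [SimpleGraph.Walk.length_append, SimpleGraph.Walk.length_reverse]
    have := A.gen_pos u; have := A.gen_pos v; omega
  · have hadj : (full A).Adj r r' := A.U1_complete r r' hr hr' hrr
    refine ⟨p.append ((SimpleGraph.Walk.cons hadj SimpleGraph.Walk.nil).append q.reverse), ?_⟩
    simp only [SimpleGraph.Walk.length_append, SimpleGraph.Walk.length_cons,
      SimpleGraph.Walk.length_nil, SimpleGraph.Walk.length_reverse]
    have := A.gen_pos u; have := A.gen_pos v; omega

instance : Nonempty A.Vert := by
  obtain ⟨a, b, c, _⟩ := A.U1_card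
  exact ⟨a⟩

lemma conn (A : ApollonianNetwork) : (full A).Connected := by
  rw [SimpleGraph.connected_iff]
  refine ⟨fun u v => ?_, inferInstance⟩
  obtain ⟨p, _⟩ := walk_bound u v
  exact ⟨p⟩

lemma fd_bound (u v : A.Vert) : fd A u v ≤ A.gen u + A.gen v - 1 := by
  obtain ⟨p, hp⟩ := walk_bound u v
  exact le_trans (SimpleGraph.dist_le p) hp

lemma fd_comm (u v : A.Vert) : fd A u v = fd A v u := SimpleGraph.dist_comm

lemma fd_triangle (u v w : A.Vert) : fd A u w ≤ fd A u v + fd A v w :=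
  (conn A).dist_triangle

lemma fd_eq_zero_iff {u v : A.Vert} : fd A u v = 0 ↔ u = v :=
  (conn A).dist_eq_zero_iff

lemma fd_adj_le_one {u v : A.Vert} (h : A.adj u v) : fd A u v ≤ 1 :=
  le_of_eq (SimpleGraph.dist_eq_one_iff_adj.2 h)

/-- The key normalization lemma: every walk can be replaced by one which is no longer
and stays within the generations of its endpoints. -/
lemma goodwalk_aux : ∀ (L : ℕ) (u v : A.Vert) (w : (full A).Walk u v), w.length ≤ L →
    ∃ w' : (full A).Walk u v, w'.length ≤ w.length ∧
      ∀ x ∈ w'.support, A.gen x ≤ max (A.gen u) (A.gen v) := by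
  intro L
  induction L with
  | zero =>
    intro u v w hw
    rw [Nat.le_zero] at hw
    cases w with
    | nil =>
      refine ⟨.nil, le_rfl, fun x hx => ?_⟩
      simp only [SimpleGraph.Walk.support_nil, List.mem_singleton] at hx
      subst hx; exact le_max_left _ _
    | cons h p => simp [SimpleGraph.Walk.length_cons] at hw
  | succ L ih =>
    intro u v w hw
    set M := max (A.gen u) (A.gen v) with hM
    by_cases hall : ∀ x ∈ w.support, A.gen x ≤ M
    · exact ⟨w, le_rfl, hall⟩
    · push_neg at hall
      obtain ⟨x0, hx0, hx0g⟩ := hall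
      haveI := Classical.decEq A.Vert
      -- pick a support vertex of maximal generation
      have hne : w.support.toFinset.Nonempty := ⟨u, by simp⟩
      obtain ⟨z, hzmem', hzmax'⟩ := w.support.toFinset.exists_max_image A.gen hne
      have hzmem : z ∈ w.support := List.mem_toFinset.1 hzmem'
      have hzmax : ∀ x ∈ w.support, A.gen x ≤ A.gen z := fun x hx =>
        hzmax' x (List.mem_toFinset.2 hx)
      clear hzmem' hzmax'
      have hzg : M < A.gen z := lt_of_lt_of_le hx0g (hzmax x0 hx0)
      have hz2 : 2 ≤ A.gen z := by
        have : 1 ≤ M := le_trans (A.gen_pos u) (le_max_left _ _)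
        omega
      haveI := Classical.decEq A.Vert
      have hzu : z ≠ u := by rintro rfl; have : A.gen z ≤ M := le_max_left _ _; omega
      have hzv : z ≠ v := by rintro rfl; have : A.gen z ≤ M := le_max_right _ _; omega
      -- split the walk at z
      set p := w.takeUntil z hzmem with hp
      set q := w.dropUntil z hzmem with hq
      have hspec : p.append q = w := w.take_spec hzmem
      -- q is a cons
      rcases hq' : q with _ | @⟨_, y', _, hzy', q2⟩
      · exact absurd rfl hzv
      rcases hp' : p.reverse with _ | @⟨_, y, _, hzy, p2⟩
      · exact absurd rfl hzu
      have hyw : y ∈ w.support := by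
        have hyp : y ∈ p.support := by
          have : y ∈ p.reverse.support := by rw [hp']; simp
          rwa [SimpleGraph.Walk.support_reverse, List.mem_reverse] at this
        exact w.support_takeUntil_subset hzmem hyp
      have hy'w : y' ∈ w.support := by
        have hy'q : y' ∈ q.support := by rw [hq']; simp
        exact w.support_dropUntil_subset hzmem hy'q
      have hyg : A.gen y < A.gen z := by
        have h1 : A.gen y ≤ A.gen z := hzmax y hyw
        rcases lt_or_eq_of_le h1 with h | h
        · exact h
        · exfalso
          have := A.adj_gen z y hzy h.symm
          omega
      have hy'g : A.gen y' < A.gen z := by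
        have h1 : A.gen y' ≤ A.gen z := hzmax y' hy'w
        rcases lt_or_eq_of_le h1 with h | h
        · exact h
        · exfalso
          have := A.adj_gen z y' hzy' h.symm
          omega
      have hlen : p.length + q.length = w.length := by
        rw [← hspec, SimpleGraph.Walk.length_append]
      have hplen : p2.length + 1 = p.length := by
        have := congrArg SimpleGraph.Walk.length hp'
        simpa [SimpleGraph.Walk.length_reverse] using this.symm
      have hqlen : q2.length + 1 = q.length := by
        have := congrArg SimpleGraph.Walk.length hq'
        simpa using this.symm
      by_cases hyy : y = y'
      · -- shortcut removing z and one duplicate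
        subst hyy
        have wnew : (full A).Walk u v := p2.reverse.append q2
        obtain ⟨w'', hw''len, hw''⟩ := ih u v (p2.reverse.append q2) (by
          rw [SimpleGraph.Walk.length_append, SimpleGraph.Walk.length_reverse]
          omega)
        refine ⟨w'', ?_, hw''⟩
        rw [SimpleGraph.Walk.length_append, SimpleGraph.Walk.length_reverse] at hw''len
        omega
      · have hadj : (full A).Adj y y' :=
          low_pairwise z hz2 hzy hyg hzy' hy'g hyy
        obtain ⟨w'', hw''len, hw''⟩ := ih u v (p2.reverse.append (SimpleGraph.Walk.cons hadj q2)) (by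
          rw [SimpleGraph.Walk.length_append, SimpleGraph.Walk.length_reverse,
            SimpleGraph.Walk.length_cons]
          omega)
        refine ⟨w'', ?_, hw''⟩
        rw [SimpleGraph.Walk.length_append, SimpleGraph.Walk.length_reverse,
          SimpleGraph.Walk.length_cons] at hw''len
        omega

lemma goodwalk {u v : A.Vert} (w : (full A).Walk u v) :
    ∃ w' : (full A).Walk u v, w'.length ≤ w.length ∧
      ∀ x ∈ w'.support, A.gen x ≤ max (A.gen u) (A.gen v) :=
  goodwalk_aux w.length u v w le_rfl


/-- Lift a walk with bounded generations to the subgraph `G n`. -/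
lemma lift_walk {n : ℕ} : ∀ {u v : A.Vert} (w : (full A).Walk u v),
    (∀ x ∈ w.support, A.gen x ≤ n) → ∀ (hu : A.gen u ≤ n) (hv : A.gen v ≤ n),
    ∃ p : (A.G n).Walk ⟨u, hu⟩ ⟨v, hv⟩, p.length = w.length := by
  intro u v w
  induction w with
  | nil => intro _ hu hv; exact ⟨.nil, rfl⟩
  | @cons a b c hab w ih =>
    intro hsup hu hv
    have hb : A.gen b ≤ n := hsup b (by simp)
    obtain ⟨p, hp⟩ := ih (fun x hx => hsup x (by simp [SimpleGraph.Walk.support_cons]; tauto)) hb hv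
    exact ⟨.cons (show (A.G n).Adj ⟨a, hu⟩ ⟨b, hb⟩ from hab) p,
      by simp [SimpleGraph.Walk.length_cons, hp]⟩

/-- Projection homomorphism from `G n` to the full graph. -/
def proj (A : ApollonianNetwork) (n : ℕ) : A.G n →g full A where
  toFun := fun x => x.1
  map_rel' := fun {x y} h => h

lemma Gn_reachable {n : ℕ} (x y : {v : A.Vert // A.gen v ≤ n}) : (A.G n).Reachable x y := by
  obtain ⟨w0, _⟩ := walk_bound x.1 y.1
  obtain ⟨w1, _, hsup⟩ := goodwalk w0
  obtain ⟨p, _⟩ := lift_walk w1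
    (fun t ht => le_trans (hsup t ht) (max_le x.2 y.2)) x.2 y.2
  exact ⟨(by exact p : (A.G n).Walk x y)⟩

lemma Gn_connected (A : ApollonianNetwork) (n : ℕ) [Nonempty {v : A.Vert // A.gen v ≤ n}] :
    (A.G n).Connected := by
  rw [SimpleGraph.connected_iff]
  exact ⟨fun x y => Gn_reachable x y, inferInstance⟩

/-- The subgraph `G n` is isometric in the full graph. -/
lemma dist_eq {n : ℕ} (x y : {v : A.Vert // A.gen v ≤ n}) :
    (A.G n).dist x y = fd A x.1 y.1 := by
  apply le_antisymm
  · obtain ⟨w0, hw0⟩ := ((conn A) x.1 y.1).exists_walk_length_eq_dist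
    obtain ⟨w1, hle, hsup⟩ := goodwalk w0
    obtain ⟨p, hp⟩ := lift_walk w1
      (fun t ht => le_trans (hsup t ht) (max_le x.2 y.2)) x.2 y.2
    calc (A.G n).dist x y ≤ p.length := SimpleGraph.dist_le _
    _ = w1.length := hp
    _ ≤ w0.length := hle
    _ = fd A x.1 y.1 := hw0
  · obtain ⟨p, hp⟩ := (Gn_reachable x y).exists_walk_length_eq_dist
    calc fd A x.1 y.1 ≤ (p.map (proj A n)).length := SimpleGraph.dist_le _
    _ = p.length := SimpleGraph.Walk.length_map _ _
    _ = (A.G n).dist x y := hp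

lemma Gn_ediam_ne_top (A : ApollonianNetwork) (n : ℕ) : (A.G n).ediam ≠ ⊤ := by
  have h : (A.G n).ediam ≤ (2 * n : ℕ) := by
    apply SimpleGraph.ediam_le_of_edist_le
    intro x y
    obtain ⟨p, hp⟩ := (Gn_reachable x y).exists_walk_length_eq_dist
    calc (A.G n).edist x y ≤ (p.length : ℕ∞) := SimpleGraph.edist_le _
    _ = ((A.G n).dist x y : ℕ∞) := by rw [hp]
    _ ≤ (2 * n : ℕ) := by
        norm_cast
        rw [dist_eq]
        have := fd_bound x.1 y.1
        have := x.2; have := y.2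
        omega
  exact ne_top_of_le_ne_top (ENat.coe_ne_top _) h

/-- Descent: from a deepest vertex, the first step of a geodesic goes down. -/
lemma lemD {v w : A.Vert} (hv : 2 ≤ A.gen v) (hw : A.gen w ≤ A.gen v) (hne : v ≠ w) :
    ∃ p, A.adj v p ∧ A.gen p < A.gen v ∧ fd A v w = fd A p w + 1 := by
  obtain ⟨w0, hw0⟩ := ((conn A) v w).exists_walk_length_eq_dist
  obtain ⟨w1, hle, hsup⟩ := goodwalk w0
  have hw0' : w0.length = fd A v w := hw0
  have hL1 : 1 ≤ fd A v w := ((conn A) v w).pos_dist_of_ne hne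
  have hlenge : fd A v w ≤ w1.length := SimpleGraph.dist_le _
  have hlen : w1.length = fd A v w := by omega
  rcases hw1 : w1 with _ | @⟨_, p, _, hvp, q⟩
  · exact absurd rfl hne
  · have hpsup : p ∈ w1.support := by rw [hw1]; simp
    have hpg : A.gen p ≤ A.gen v := by
      have := hsup p hpsup
      omega
    have hpg' : A.gen p < A.gen v := by
      rcases lt_or_eq_of_le hpg with h | h
      · exact h
      · exfalso; have := A.adj_gen v p hvp h.symm; omega
    refine ⟨p, hvp, hpg', ?_⟩
    have h1 : fd A p w ≤ q.length := SimpleGraph.dist_le _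
    have h2 : q.length + 1 = w1.length := by rw [hw1]; simp
    have h3 : fd A v w ≤ fd A v p + fd A p w := fd_triangle v p w
    have h4 : fd A v p ≤ 1 := fd_adj_le_one hvp
    omega

/-- `Near a v`: every lower neighbour of `v` is `a` or adjacent to `a`. -/
def Near (A : ApollonianNetwork) (a v : A.Vert) : Prop :=
  ∀ t, A.adj v t → A.gen t < A.gen v → t = a ∨ A.adj a t

/-- The insulation lemma: a vertex all of whose lower neighbours are near `a`
is at least as far from anything (not above it) as `a` is. -/
lemma lemE {a v z : A.Vert} (hv : 2 ≤ A.gen v) (hz : A.gen z ≤ A.gen v) (hne : v ≠ z)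
    (hnear : Near A a v) : fd A a z ≤ fd A v z := by
  obtain ⟨p, hvp, hpg, hdist⟩ := lemD hv hz hne
  rcases hnear p hvp hpg with rfl | hadj
  · omega
  · have h1 : fd A a z ≤ fd A a p + fd A p z := fd_triangle a p z
    have h2 : fd A a p ≤ 1 := fd_adj_le_one hadj
    omega

/-- Every vertex lies in a triangle with two vertices of generation at most its own. -/
lemma tri (a : A.Vert) : ∃ x y, x ≠ y ∧ A.adj a x ∧ A.adj a y ∧ A.adj x y ∧
    A.gen x ≤ A.gen a ∧ A.gen y ≤ A.gen a := by
  by_cases h1 : A.gen a = 1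
  · obtain ⟨a0, b0, c0, hab, hac, hbc, hU⟩ := A.U1_card
    rw [Set.ext_iff] at hU
    have ha0 : A.gen a0 = 1 := (hU a0).2 (by simp)
    have hb0 : A.gen b0 = 1 := (hU b0).2 (by simp)
    have hc0 : A.gen c0 = 1 := (hU c0).2 (by simp)
    have hmem : a = a0 ∨ a = b0 ∨ a = c0 := by simpa using (hU a).1 h1
    rcases hmem with rfl | rfl | rfl
    · exact ⟨b0, c0, hbc, A.U1_complete _ _ h1 hb0 hab, A.U1_complete _ _ h1 hc0 hac,
        A.U1_complete _ _ hb0 hc0 hbc, by omega, by omega⟩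
    · exact ⟨a0, c0, hac, A.U1_complete _ _ h1 ha0 (Ne.symm hab),
        A.U1_complete _ _ h1 hc0 hbc, A.U1_complete _ _ ha0 hc0 hac, by omega, by omega⟩
    · exact ⟨a0, b0, hab, A.U1_complete _ _ h1 ha0 (Ne.symm hac),
        A.U1_complete _ _ h1 hb0 (Ne.symm hbc), A.U1_complete _ _ ha0 hb0 hab, by omega, by omega⟩
  · have h2 : 2 ≤ A.gen a := by have := A.gen_pos a; omega
    obtain ⟨u, x, y, hau, hax, hay, hgu, hgx, hgy, hux, huy, hxy, _⟩ := created' a h2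
    exact ⟨u, x, adj_ne hux, hau, hax, hux, by omega, by omega⟩

/-- Convenient form of the `attach` axiom. -/
lemma attach' {k : ℕ} (hk : 1 ≤ k) {u x y : A.Vert}
    (hu : A.gen u = k) (hx : A.gen x ≤ k) (hy : A.gen y ≤ k) (hxy : x ≠ y)
    (hux : A.adj u x) (huy : A.adj u y) (haxy : A.adj x y) :
    ∃ v, A.gen v = k + 1 ∧ A.adj v u ∧ A.adj v x ∧ A.adj v y ∧
      (∀ t, A.adj v t → A.gen t < A.gen v → (t = u ∨ t = x ∨ t = y)) := by
  obtain ⟨v, ⟨hgv, hset⟩, -⟩ := A.attach k hk u x y hu hx hy hxy hux huy haxy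
  rw [Set.ext_iff] at hset
  have hvu := (hset u).2 (by simp)
  have hvx := (hset x).2 (by simp)
  have hvy := (hset y).2 (by simp)
  refine ⟨v, hgv, hvu.1, hvx.1, hvy.1, fun t ht hlt => ?_⟩
  have : t ∈ ({u, x, y} : Set A.Vert) := (hset t).1 ⟨ht, by omega⟩
  simpa using this

/-- Towers over a vertex `a`. -/
lemma tower (a : A.Vert) : ∀ n, A.gen a + 3 ≤ n → ∃ v α β : A.Vert,
    A.gen v = n ∧ A.gen α = n - 1 ∧ A.gen β = n - 2 ∧
    A.adj a α ∧ A.adj a β ∧ A.adj v a ∧ A.adj v α ∧ A.adj v β ∧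
    Near A a α ∧ Near A a β ∧
    (∀ t, A.adj v t → A.gen t < A.gen v → (t = a ∨ t = α ∨ t = β)) := by
  intro n
  induction n with
  | zero => omega
  | succ n ih =>
    intro hn
    by_cases hcase : n + 1 = A.gen a + 3
    · -- base case : build the three-storey tower explicitly
      obtain ⟨x, y, hxy, hax, hay, hxay, hgx, hgy⟩ := tri a
      have hga := A.gen_pos a
      obtain ⟨v1, hg1, h1a, h1x, h1y, hlow1⟩ :=
        attach' hga rfl hgx hgy hxy hax hay hxay
      obtain ⟨v2, hg2, h2v1, h2a, h2x, hlow2⟩ :=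
        attach' (k := A.gen a + 1) (by omega) hg1 (by omega) (by omega)
          (adj_ne hax) h1a h1x hax
      obtain ⟨v3, hg3, h3v2, h3v1, h3a, hlow3⟩ :=
        attach' (k := A.gen a + 2) (by omega) hg2 (by omega) (by omega)
          (show v1 ≠ a from fun h => by rw [h] at hg1; omega)
          h2v1 h2a h1a
      refine ⟨v3, v2, v1, by omega, by omega, by omega,
        A.adj_symm _ _ h2a, A.adj_symm _ _ h1a, h3a, h3v2, h3v1, ?_, ?_, ?_⟩
      · intro t ht hlt
        rcases hlow2 t ht hlt with rfl | rfl | rfl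
        · exact Or.inr (A.adj_symm _ _ h1a)
        · exact Or.inl rfl
        · exact Or.inr hax
      · intro t ht hlt
        rcases hlow1 t ht hlt with rfl | rfl | rfl
        · exact Or.inl rfl
        · exact Or.inr hax
        · exact Or.inr hay
      · intro t ht hlt
        rcases hlow3 t ht hlt with rfl | rfl | rfl
        · exact Or.inr (Or.inl rfl)
        · exact Or.inr (Or.inr rfl)
        · exact Or.inl rfl
    · have hn' : A.gen a + 3 ≤ n := by omega
      obtain ⟨v, α, β, hgv, hgα, hgβ, haα, haβ, hva, hvα, hvβ, hnα, hnβ, hlow⟩ := ih hn'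
      obtain ⟨v', hgv', h'v, h'α, h'a, hlow'⟩ :=
        attach' (k := n) (by omega) hgv (by omega) (by omega)
          (show α ≠ a from fun h => by rw [h] at hgα; omega)
          hvα hva (A.adj_symm _ _ haα)
      refine ⟨v', v, α, hgv', by omega, by omega,
        A.adj_symm _ _ hva, haα, h'a, h'v, h'α, ?_, hnα, ?_⟩
      · intro t ht hlt
        rcases hlow t ht hlt with rfl | rfl | rfl
        · exact Or.inl rfl
        · exact Or.inr haα
        · exact Or.inr haβ
      · intro t ht hlt
        rcases hlow' t ht hlt with rfl | rfl | rfl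
        · exact Or.inr (Or.inl rfl)
        · exact Or.inr (Or.inr rfl)
        · exact Or.inl rfl


/-- The main lower bound construction: towers over a pair at distance `≥ 2`. -/
lemma lower {k : ℕ} (hk : 1 ≤ k) {a b : A.Vert} (ha : A.gen a ≤ k) (hb : A.gen b ≤ k)
    (hD : 2 ≤ fd A a b) :
    ∃ v w, A.gen v = k + 3 ∧ A.gen w = k + 3 ∧ fd A a b + 2 ≤ fd A v w := by
  obtain ⟨v, α, β, hgv, hgα, hgβ, haα, haβ, hva, hvα, hvβ, hnα, hnβ, hlow⟩ :=
    tower a (k + 3) (by omega)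
  obtain ⟨w, α', β', hgw, hgα', hgβ', hbα', hbβ', hwb, hwα', hwβ', hnα', hnβ', hlow'⟩ :=
    tower b (k + 3) (by omega)
  have hab_ne : a ≠ b := by
    rintro rfl
    rw [show fd A a a = 0 from SimpleGraph.dist_self] at hD
    omega
  have hab_nadj : ¬ A.adj a b := fun h => by have := fd_adj_le_one h; omega
  -- properties of the tower elements
  have sideA : ∀ σ, (σ = α ∨ σ = β) →
      2 ≤ A.gen σ ∧ k + 1 ≤ A.gen σ ∧ A.adj a σ ∧ Near A a σ := by
    rintro σ (rfl | rfl)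
    · exact ⟨by omega, by omega, haα, hnα⟩
    · exact ⟨by omega, by omega, haβ, hnβ⟩
  have sideB : ∀ σ, (σ = α' ∨ σ = β') →
      2 ≤ A.gen σ ∧ k + 1 ≤ A.gen σ ∧ A.adj b σ ∧ Near A b σ := by
    rintro σ (rfl | rfl)
    · exact ⟨by omega, by omega, hbα', hnα'⟩
    · exact ⟨by omega, by omega, hbβ', hnβ'⟩
  have cross : ∀ σ, (2 ≤ A.gen σ ∧ k + 1 ≤ A.gen σ ∧ A.adj a σ ∧ Near A a σ) →
      ∀ σ', (2 ≤ A.gen σ' ∧ k + 1 ≤ A.gen σ' ∧ A.adj b σ' ∧ Near A b σ') →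
      fd A a b ≤ fd A σ' σ := by
    rintro σ ⟨h1, h2, h3, h4⟩ σ' ⟨h1', h2', h3', h4'⟩
    have hne : σ ≠ σ' := by
      rintro rfl
      have hadj : A.adj a b :=
        low_pairwise σ h1 (A.adj_symm _ _ h3) (by omega) (A.adj_symm _ _ h3') (by omega) hab_ne
      exact hab_nadj hadj
    by_cases hcmp : A.gen σ ≤ A.gen σ'
    · have e1 : fd A a b ≤ fd A σ b :=
        lemE h1 (by omega) (by rintro rfl; omega) h4
      have e2 : fd A b σ ≤ fd A σ' σ :=
        lemE h1' hcmp (Ne.symm hne) h4'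
      have e3 : fd A σ b = fd A b σ := fd_comm _ _
      omega
    · have e1 : fd A b a ≤ fd A σ' a :=
        lemE h1' (by omega) (by rintro rfl; omega) h4'
      have e2 : fd A a σ' ≤ fd A σ σ' :=
        lemE h1 (by omega) hne h4
      have e3 : fd A a b = fd A b a := fd_comm _ _
      have e4 : fd A σ' a = fd A a σ' := fd_comm _ _
      have e5 : fd A σ σ' = fd A σ' σ := fd_comm _ _
      omega
  have hvw : v ≠ w := by
    rintro rfl
    have hva' : A.adj v a := hva
    rcases hlow' a hva' (by omega) with rfl | h | h
    · exact hab_ne rfl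
    · exact hab_nadj (h ▸ A.adj_symm _ _ hbα')
    · exact hab_nadj (h ▸ A.adj_symm _ _ hbβ')
  obtain ⟨p, hvp, hplt, hdp⟩ := lemD (v := v) (w := w) (by omega) (by omega) hvw
  obtain ⟨q, hwq, hqlt, hdq⟩ := lemD (v := w) (w := p) (by omega) (by omega)
    (by rintro rfl; omega)
  have hsideB' : ∀ q', A.adj w q' → A.gen q' < A.gen w → q' = b ∨
      (2 ≤ A.gen q' ∧ k + 1 ≤ A.gen q' ∧ A.adj b q' ∧ Near A b q') := by
    intro q' h1 h2
    rcases hlow' q' h1 h2 with h | h | h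
    · exact Or.inl h
    · exact Or.inr (sideB q' (Or.inl h))
    · exact Or.inr (sideB q' (Or.inr h))
  have hsideA' : ∀ p', A.adj v p' → A.gen p' < A.gen v → p' = a ∨
      (2 ≤ A.gen p' ∧ k + 1 ≤ A.gen p' ∧ A.adj a p' ∧ Near A a p') := by
    intro p' h1 h2
    rcases hlow p' h1 h2 with h | h | h
    · exact Or.inl h
    · exact Or.inr (sideA p' (Or.inl h))
    · exact Or.inr (sideA p' (Or.inr h))
  have hkey : fd A a b ≤ fd A q p := by
    rcases hsideA' p hvp hplt with hpa | hpA
    · rcases hsideB' q hwq hqlt with hqb | hqB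
      · rw [hpa, hqb, fd_comm]
      · obtain ⟨h1', h2', h3', h4'⟩ := hqB
        have he : fd A b a ≤ fd A q a :=
          lemE h1' (by omega) (by rintro rfl; omega) h4'
        have e3 : fd A a b = fd A b a := fd_comm _ _
        rw [hpa]
        omega
    · obtain ⟨h1, h2, h3, h4⟩ := hpA
      rcases hsideB' q hwq hqlt with hqb | hqB
      · have he : fd A a b ≤ fd A p b :=
          lemE h1 (by omega) (by rintro rfl; omega) h4
        have e3 : fd A p b = fd A b p := fd_comm _ _
        rw [hqb]
        omega
      · exact cross p ⟨h1, h2, h3, h4⟩ q hqB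
  have hcomm : fd A p w = fd A w p := fd_comm _ _
  exact ⟨v, w, hgv, hgw, by omega⟩


/-- The basic small vertices: the three generation-1 vertices, the unique generation-2
vertex, and assorted vertices of generations 3 and 4 realizing distances. -/
lemma smallpair : ∃ (t1 t2 p q : A.Vert), A.gen t1 = 3 ∧ A.gen t2 = 3 ∧ t1 ≠ t2 ∧
    A.gen p = 4 ∧ A.gen q = 4 ∧ 3 ≤ fd A p q := by
  obtain ⟨a0, b0, c0, hab, hac, hbc, hU⟩ := A.U1_card
  rw [Set.ext_iff] at hU
  have ha0 : A.gen a0 = 1 := (hU a0).2 (by simp)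
  have hb0 : A.gen b0 = 1 := (hU b0).2 (by simp)
  have hc0 : A.gen c0 = 1 := (hU c0).2 (by simp)
  have hab' : A.adj a0 b0 := A.U1_complete _ _ ha0 hb0 hab
  have hac' : A.adj a0 c0 := A.U1_complete _ _ ha0 hc0 hac
  have hbc' : A.adj b0 c0 := A.U1_complete _ _ hb0 hc0 hbc
  obtain ⟨h, hgh, hha, hhb, hhc, hlowh⟩ :=
    attach' (k := 1) le_rfl ha0 (le_of_eq hb0) (le_of_eq hc0) hbc hab' hac' hbc'
  obtain ⟨t1, hgt1, ht1h, ht1a, ht1b, hlowt1⟩ :=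
    attach' (k := 2) (by omega) hgh (by omega) (by omega) hab hha hhb hab'
  obtain ⟨t2, hgt2, ht2h, ht2a, ht2c, hlowt2⟩ :=
    attach' (k := 2) (by omega) hgh (by omega) (by omega) hac hha hhc hac'
  have ht12 : t1 ≠ t2 := by
    intro h12
    have hadj : A.adj t1 c0 := h12 ▸ ht2c
    rcases hlowt1 c0 hadj (by omega) with h' | h' | h'
    · have := congrArg A.gen h'; omega
    · exact hac h'.symm
    · exact hbc h'.symm
  obtain ⟨p, hgp, hpt1, hpa, hpb, hlowp⟩ :=
    attach' (k := 3) (by omega) hgt1 (by omega) (by omega) hab ht1a ht1b hab'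
  obtain ⟨q, hgq, hqt2, hqh, hqc, hlowq⟩ :=
    attach' (k := 3) (by omega) hgt2 (by omega) (by omega)
      (show h ≠ c0 from fun he => by rw [he] at hgh; omega) ht2h ht2c hhc
  refine ⟨t1, t2, p, q, by omega, by omega, ht12, by omega, by omega, ?_⟩
  have hpq : p ≠ q := by
    intro hpq
    have hadj : A.adj p c0 := hpq ▸ hqc
    rcases hlowp c0 hadj (by omega) with h' | h' | h'
    · have := congrArg A.gen h'; omega
    · exact hac h'.symm
    · exact hbc h'.symm
  obtain ⟨s, hps, hslt, hds⟩ := lemD (v := p) (w := q) (by omega) (by omega) hpq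
  obtain ⟨r, hqr, hrlt, hdr⟩ := lemD (v := q) (w := s) (by omega) (by omega)
    (by rintro rfl; omega)
  have hrs : r ≠ s := by
    rcases hlowp s hps hslt with h1 | h1 | h1 <;>
      rcases hlowq r hqr hrlt with h2 | h2 | h2 <;>
        intro hh <;> rw [h1] at hh <;> rw [h2] at hh <;>
          first
          | exact ht12 hh.symm
          | exact hac hh.symm
          | exact hbc hh.symm
          | (have := congrArg A.gen hh; omega)
  have h1 : 1 ≤ fd A r s := by
    have := fd_eq_zero_iff (A := A) (u := r) (v := s)
    by_contra hcon
    exact hrs (this.1 (by omega))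
  have hcm : fd A s q = fd A q s := fd_comm _ _
  omega

/-- `G 1` is complete. -/
lemma G1_top : (A.G 1) = ⊤ := by
  ext x y
  constructor
  · intro hxy
    exact fun he => A.adj_irrefl x.1 (by rw [he] at hxy ⊢; exact hxy)
  · intro hxy
    have hx : A.gen x.1 = 1 := le_antisymm x.2 (A.gen_pos _)
    have hy : A.gen y.1 = 1 := le_antisymm y.2 (A.gen_pos _)
    exact A.U1_complete _ _ hx hy (fun he => hxy (Subtype.ext he))

/-- Each generation-2 vertex is adjacent to all three generation-1 vertices;
moreover there is only one generation-2 vertex; hence `G 2` is complete. -/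
lemma G2_top : (A.G 2) = ⊤ := by
  classical
  obtain ⟨a0, b0, c0, hab, hac, hbc, hU⟩ := A.U1_card
  rw [Set.ext_iff] at hU
  have ha0 : A.gen a0 = 1 := (hU a0).2 (by simp)
  have hb0 : A.gen b0 = 1 := (hU b0).2 (by simp)
  have hc0 : A.gen c0 = 1 := (hU c0).2 (by simp)
  have key : ∀ v, A.gen v = 2 → ∀ t, A.gen t = 1 → A.adj v t := by
    intro v hv t ht
    obtain ⟨u, x, y, hvu, hvx, hvy, hgu, hgx, hgy, hux, huy, hxy, hmem⟩ :=
      created' v (by omega)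
    have hu1 : A.gen u = 1 := by omega
    have hx1 : A.gen x = 1 := by have := A.gen_pos x; omega
    have hy1 : A.gen y = 1 := by have := A.gen_pos y; omega
    have hsub : ({u, x, y} : Finset A.Vert) ⊆ {a0, b0, c0} := by
      intro z hz
      simp only [Finset.mem_insert, Finset.mem_singleton] at hz ⊢
      rcases hz with rfl | rfl | rfl
      · simpa using (hU z).1 hu1
      · simpa using (hU z).1 hx1
      · simpa using (hU z).1 hy1
    have hcard : ({u, x, y} : Finset A.Vert).card = 3 := by
      rw [Finset.card_insert_of_notMem (by simp [adj_ne hux, adj_ne huy]),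
        Finset.card_insert_of_notMem (by simp [adj_ne hxy])]
      rfl
    have hcard2 : ({a0, b0, c0} : Finset A.Vert).card ≤ 3 :=
      Finset.card_le_three
    have heq : ({u, x, y} : Finset A.Vert) = {a0, b0, c0} :=
      Finset.eq_of_subset_of_card_le hsub (by omega)
    have htmem : t ∈ ({u, x, y} : Finset A.Vert) := by
      rw [heq]
      simp only [Finset.mem_insert, Finset.mem_singleton]
      simpa using (hU t).1 ht
    simp only [Finset.mem_insert, Finset.mem_singleton] at htmem
    rcases htmem with rfl | rfl | rfl
    · exact hvu
    · exact hvx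
    · exact hvy
  have uniq : ∀ v w, A.gen v = 2 → A.gen w = 2 → v = w := by
    intro v w hv hw
    obtain ⟨z, hz, hz_uniq⟩ := A.attach 1 le_rfl a0 b0 c0 ha0 (le_of_eq hb0) (le_of_eq hc0)
      hbc (A.U1_complete _ _ ha0 hb0 hab) (A.U1_complete _ _ ha0 hc0 hac)
      (A.U1_complete _ _ hb0 hc0 hbc)
    have hset : ∀ u, A.gen u = 2 →
        ({w | A.adj u w ∧ A.gen w ≤ 1} : Set A.Vert) = {a0, b0, c0} := by
      intro u hu
      ext z'
      simp only [Set.mem_setOf_eq, Set.mem_insert_iff, Set.mem_singleton_iff]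
      constructor
      · rintro ⟨hz1, hz2⟩
        have : A.gen z' = 1 := le_antisymm hz2 (A.gen_pos _)
        simpa using (hU z').1 this
      · rintro (rfl | rfl | rfl)
        · exact ⟨key u hu z' ha0, le_of_eq ha0⟩
        · exact ⟨key u hu z' hb0, le_of_eq hb0⟩
        · exact ⟨key u hu z' hc0, le_of_eq hc0⟩
    rw [hz_uniq v ⟨hv, hset v hv⟩, hz_uniq w ⟨hw, hset w hw⟩]
  ext x y
  constructor
  · intro hxy
    exact fun he => A.adj_irrefl x.1 (by rw [he] at hxy ⊢; exact hxy)
  · intro hxy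
    have hne : x.1 ≠ y.1 := fun he => hxy (Subtype.ext he)
    have hx := A.gen_pos x.1; have hy := A.gen_pos y.1
    have hx2 := x.2; have hy2 := y.2
    rcases Nat.lt_or_ge (A.gen x.1) 2 with h1 | h1
    · rcases Nat.lt_or_ge (A.gen y.1) 2 with h2 | h2
      · exact A.U1_complete _ _ (by omega) (by omega) hne
      · exact A.adj_symm _ _ (key y.1 (by omega) x.1 (by omega))
    · rcases Nat.lt_or_ge (A.gen y.1) 2 with h2 | h2
      · exact key x.1 (by omega) y.1 (by omega)
      · exact absurd (uniq x.1 y.1 (by omega) (by omega)) hne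


end ApollonianNetwork

open ApollonianNetwork

theorem stmt18 (A : ApollonianNetwork) (k : ℕ) (hk : 1 ≤ k) :
    (A.G (k + 3)).diam = (A.G k).diam + 2 := by
  have hne3 := Gn_ediam_ne_top A (k + 3)
  have hnek := Gn_ediam_ne_top A k
  set D := (A.G k).diam with hD
  -- every vertex of `G (k+3)` is within distance 1 of `G k`
  have hnear : ∀ u : A.Vert, A.gen u ≤ k + 3 → ∃ z, A.gen z ≤ k ∧ fd A u z ≤ 1 := by
    intro u hu
    by_cases h : A.gen u ≤ k
    · exact ⟨u, h, by rw [show fd A u u = 0 from SimpleGraph.dist_self]; omega⟩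
    · obtain ⟨z, hz, hzg⟩ := low_min u (by have := A.gen_pos u; omega)
      have h1 : max 1 (A.gen u - 3) ≤ k := max_le hk (by omega)
      exact ⟨z, by omega, fd_adj_le_one hz⟩
  -- upper bound on all distances in `G (k+3)`
  have hdistub : ∀ x y : {v : A.Vert // A.gen v ≤ k + 3}, fd A x.1 y.1 ≤ D + 2 := by
    intro x y
    obtain ⟨z, hz, hz1⟩ := hnear x.1 x.2
    obtain ⟨z', hz', hz'1⟩ := hnear y.1 y.2
    have t1 : fd A x.1 y.1 ≤ fd A x.1 z + fd A z y.1 := fd_triangle _ _ _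
    have t2 : fd A z y.1 ≤ fd A z z' + fd A z' y.1 := fd_triangle _ _ _
    have hzz : fd A z z' ≤ D := by
      have he : (A.G k).dist ⟨z, hz⟩ ⟨z', hz'⟩ = fd A z z' := dist_eq _ _
      rw [← he]
      exact SimpleGraph.dist_le_diam hnek
    have hcm : fd A z' y.1 = fd A y.1 z' := fd_comm _ _
    omega
  have hub : (A.G (k + 3)).diam ≤ D + 2 := by
    have hle : (A.G (k + 3)).ediam ≤ ((D + 2 : ℕ) : ℕ∞) := by
      apply SimpleGraph.ediam_le_of_edist_le
      intro x y
      obtain ⟨p, hp⟩ := (Gn_reachable x y).exists_walk_length_eq_dist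
      calc (A.G (k + 3)).edist x y ≤ (p.length : ℕ∞) := SimpleGraph.edist_le _
      _ = (((A.G (k + 3)).dist x y : ℕ) : ℕ∞) := by rw [hp]
      _ ≤ ((D + 2 : ℕ) : ℕ∞) := by
          have h1 := hdistub x y
          have hde : (A.G (k + 3)).dist x y = fd A x.1 y.1 := dist_eq _ _
          exact Nat.cast_le.mpr (by omega)
    calc (A.G (k + 3)).diam = (A.G (k + 3)).ediam.toNat := rfl
    _ ≤ ((D + 2 : ℕ) : ℕ∞).toNat := ENat.toNat_le_toNat hle (ENat.coe_ne_top _)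
    _ = D + 2 := by
        rw [ENat.toNat_coe]
  -- a pair of vertices realizing the lower bound
  obtain ⟨v, w, hv3, hw3, hvw⟩ :
      ∃ v w : A.Vert, A.gen v ≤ k + 3 ∧ A.gen w ≤ k + 3 ∧ D + 2 ≤ fd A v w := by
    obtain ⟨t1, t2, p, q, hgt1, hgt2, ht12, hgp, hgq, hfpq⟩ := smallpair (A := A)
    obtain ⟨a0, b0, c0, hab, hac, hbc, hU⟩ := A.U1_card
    rw [Set.ext_iff] at hU
    have ha0 : A.gen a0 = 1 := (hU a0).2 (by simp)
    have hb0 : A.gen b0 = 1 := (hU b0).2 (by simp)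
    by_cases hk1 : k = 1
    · subst hk1
      haveI : Nontrivial {v : A.Vert // A.gen v ≤ 1} :=
        ⟨⟨a0, le_of_eq ha0⟩, ⟨b0, le_of_eq hb0⟩, fun h => hab (congrArg Subtype.val h)⟩
      have hD1 : D = 1 := by rw [hD, G1_top]; exact SimpleGraph.diam_top
      exact ⟨p, q, by omega, by omega, by omega⟩
    by_cases hk2 : k = 2
    · subst hk2
      haveI : Nontrivial {v : A.Vert // A.gen v ≤ 2} :=
        ⟨⟨a0, by omega⟩, ⟨b0, by omega⟩, fun h => hab (congrArg Subtype.val h)⟩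
      have hD1 : D = 1 := by rw [hD, G2_top]; exact SimpleGraph.diam_top
      exact ⟨p, q, by omega, by omega, by omega⟩
    · have hk3 : 3 ≤ k := by omega
      haveI : Nonempty {v : A.Vert // A.gen v ≤ k} := ⟨⟨a0, by omega⟩⟩
      obtain ⟨x, y, hxy⟩ := SimpleGraph.exists_dist_eq_diam (G := A.G k)
      have hfd : fd A x.1 y.1 = D := by rw [← dist_eq x y]; exact hxy
      have ht2le : 2 ≤ fd A t1 t2 := by
        have hne0 : fd A t1 t2 ≠ 0 := fun h => ht12 (fd_eq_zero_iff.1 h)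
        have hne1 : fd A t1 t2 ≠ 1 := by
          intro h
          have hadj : A.adj t1 t2 := SimpleGraph.dist_eq_one_iff_adj.1 h
          have := A.adj_gen t1 t2 hadj (by omega)
          omega
        omega
      have hDlb : 2 ≤ D := by
        have he : (A.G k).dist ⟨t1, by omega⟩ ⟨t2, by omega⟩ = fd A t1 t2 := dist_eq _ _
        have h2 := SimpleGraph.dist_le_diam (G := A.G k) hnek
          (u := ⟨t1, by omega⟩) (v := ⟨t2, by omega⟩)
        omega
      obtain ⟨v, w, hgv, hgw, hge⟩ := lower hk x.2 y.2 (by omega)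
      exact ⟨v, w, le_of_eq hgv, le_of_eq hgw, by omega⟩
  have hlb : D + 2 ≤ (A.G (k + 3)).diam := by
    have he : (A.G (k + 3)).dist ⟨v, hv3⟩ ⟨w, hw3⟩ = fd A v w := dist_eq _ _
    have h2 := SimpleGraph.dist_le_diam (G := A.G (k + 3)) hne3
      (u := ⟨v, hv3⟩) (v := ⟨w, hw3⟩)
    omega
  omega
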